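/- arXiv:1109.0343 — 2 statements merged into one kernel-verified Lean document; each statement's English description precedes it below -/
import Mathlib

section
/- For α > 0 and π ∈ (0,1), define f_1(π|α) = α(1-π)^{α-1} and for i ≥ 2, f_i(π|α) = (α^i/(i-2)!) ∫_π^1 w^{α-2}(ln(1/w))^{i-2}(1-π/w)^{α-1} dw. Then ∑_{i=1}^∞ f_i(π|α) = α π^{-1} (1-π)^{α-1}. -/
open Real MeasureTheory intervalIntegral

private lemma aux_intB (a p : ℝ) (ha : 0 < a) (hp : 0 < p) (hp1 : p < 1) :
    IntegrableOn (fun w => (1 - p / w) ^ (a - 1)) (Set.Icc p 1) := by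
  have key : IntegrableOn (fun w : ℝ => (w - p) ^ (a - 1)) (Set.Icc p 1) := by
    have h0 : IntervalIntegrable (fun x : ℝ => x ^ (a - 1)) volume 0 (1 - p) :=
      intervalIntegrable_rpow' (by linarith)
    have h1 := h0.comp_sub_right p
    rw [zero_add, sub_add_cancel] at h1
    rw [intervalIntegrable_iff_integrableOn_Ioc_of_le hp1.le] at h1
    rwa [integrableOn_Icc_iff_integrableOn_Ioc]
  have := key.mul_continuousOn (g' := fun w : ℝ => w ^ ((1:ℝ) - a))
    (ContinuousOn.rpow_const continuousOn_id (fun w hw => Or.inl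
      (lt_of_lt_of_le hp hw.1).ne')) isCompact_Icc
  refine this.congr_fun (fun w hw => ?_) measurableSet_Icc
  have hw0 : (0:ℝ) < w := lt_of_lt_of_le hp hw.1
  have hwp : 0 ≤ w - p := by linarith [hw.1]
  have h2 : 1 - p / w = (w - p) / w := by field_simp
  rw [h2, Real.div_rpow hwp hw0.le, div_eq_mul_inv, ← Real.rpow_neg hw0.le]
  ring_nf

private lemma aux_ftc (a p : ℝ) (ha : 0 < a) (hp : 0 < p) (hp1 : p < 1)
    (hint : IntervalIntegrable (fun w : ℝ => (w ^ 2)⁻¹ * (1 - p / w) ^ (a - 1)) volume p 1) :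
    ∫ w in p..1, (w ^ 2)⁻¹ * (1 - p / w) ^ (a - 1) = (1 - p) ^ a / (a * p) := by
  set G : ℝ → ℝ := fun w => (1 / (a * p)) * (1 - p / w) ^ a with hG
  have hderiv : ∀ w ∈ Set.Ioo p 1, HasDerivAt G ((w ^ 2)⁻¹ * (1 - p / w) ^ (a - 1)) w := by
    intro w hw
    have hw0 : (0:ℝ) < w := lt_trans hp hw.1
    have hb : 0 < 1 - p / w := by
      have : p / w < 1 := (div_lt_one hw0).mpr hw.1
      linarith
    have h1 : HasDerivAt (fun w : ℝ => 1 - p / w) (p / w ^ 2) w := by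
      have := ((hasDerivAt_inv hw0.ne').const_mul p).const_sub 1
      simp only [div_eq_mul_inv]
      convert this using 1
      all_goals first | rfl | ring
    have h2 := (h1.rpow_const (p := a) (Or.inl hb.ne')).const_mul (1 / (a * p))
    convert h2 using 1
    all_goals first | rfl | skip
    field_simp
  have htp : Filter.Tendsto G (nhdsWithin p (Set.Ioi p)) (nhds 0) := by
    have hc : ContinuousAt G p := by
      have hinner : ContinuousAt (fun w : ℝ => 1 - p / w) p :=
        continuousAt_const.sub (continuousAt_const.div continuousAt_id hp.ne')
      exact (hinner.rpow_const (Or.inr ha.le)).const_mul _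
    have hval : G p = 0 := by
      simp only [hG]
      rw [show (1:ℝ) - p / p = 0 by field_simp; ring, Real.zero_rpow ha.ne', mul_zero]
    rw [← hval]
    exact hc.continuousWithinAt
  have ht1 : Filter.Tendsto G (nhdsWithin 1 (Set.Iio 1))
      (nhds ((1 / (a * p)) * (1 - p) ^ a)) := by
    have hb : (1:ℝ) - p / 1 ≠ 0 := by simp; linarith
    have hc : ContinuousAt G 1 := by
      have hinner : ContinuousAt (fun w : ℝ => 1 - p / w) 1 :=
        continuousAt_const.sub (continuousAt_const.div continuousAt_id one_ne_zero)
      exact (hinner.rpow_const (Or.inl hb)).const_mul _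
    have hval : G 1 = (1 / (a * p)) * (1 - p) ^ a := by simp [hG]
    rw [← hval]
    exact hc.continuousWithinAt
  rw [integral_eq_sub_of_hasDerivAt_of_tendsto hp1 hderiv hint htp ht1, sub_zero]
  field_simp

/-- With `f_1(π|α) = α(1-π)^{α-1}` and, for `i ≥ 2`,
`f_i(π|α) = (α^i/(i-2)!) ∫_π^1 w^{α-2}(ln(1/w))^{i-2}(1-π/w)^{α-1} dw`,
we have `∑_{i=1}^∞ f_i(π|α) = α π⁻¹ (1-π)^{α-1}`. -/
theorem stmt_5 (a : ℝ) (ha : 0 < a) (p : ℝ) (hp : 0 < p) (hp1 : p < 1)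
    (f : ℕ → ℝ)
    (hf1 : f 1 = a * (1 - p) ^ (a - 1))
    (hfi : ∀ i : ℕ, 2 ≤ i →
      f i = (a ^ i / (Nat.factorial (i - 2) : ℝ)) *
        ∫ w in p..1, w ^ (a - 2) * (Real.log (1 / w)) ^ (i - 2) *
          (1 - p / w) ^ (a - 1)) :
    ∑' i : ℕ, f (i + 1) = a * p⁻¹ * (1 - p) ^ (a - 1) := by
  have hIB := aux_intB a p ha hp hp1
  have key : ∀ g : ℝ → ℝ, ContinuousOn g (Set.Icc p 1) →
      IntegrableOn (fun w => g w * (1 - p / w) ^ (a - 1)) (Set.Ioc p 1) := fun g hg =>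
    (hIB.continuousOn_mul hg isCompact_Icc).mono_set Set.Ioc_subset_Icc_self
  -- continuity facts
  have hcg : ∀ k : ℕ, ContinuousOn
      (fun w : ℝ => (a ^ (k + 2) / (Nat.factorial k : ℝ)) * w ^ (a - 2)
        * (Real.log (1 / w)) ^ k) (Set.Icc p 1) := by
    intro k
    have hne : ∀ w ∈ Set.Icc p 1, w ≠ 0 := fun w hw => (lt_of_lt_of_le hp hw.1).ne'
    have h1 : ContinuousOn (fun w : ℝ => w ^ (a - 2)) (Set.Icc p 1) :=
      ContinuousOn.rpow_const continuousOn_id (fun w hw => Or.inl (hne w hw))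
    have h2 : ContinuousOn (fun w : ℝ => Real.log (1 / w)) (Set.Icc p 1) := by
      apply ContinuousOn.log
      · exact continuousOn_const.div continuousOn_id hne
      · intro w hw
        exact one_div_ne_zero (hne w hw)
    exact (continuousOn_const.mul h1).mul (h2.pow k)
  set F : ℕ → ℝ → ℝ := fun k w => ((a ^ (k + 2) / (Nat.factorial k : ℝ)) * w ^ (a - 2)
      * (Real.log (1 / w)) ^ k) * (1 - p / w) ^ (a - 1) with hF
  have hFint : ∀ k : ℕ, Integrable (F k) (volume.restrict (Set.Ioc p 1)) := fun k =>
    key _ (hcg k)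
  -- nonnegativity on Ioc
  have hFnonneg : ∀ k : ℕ, ∀ w ∈ Set.Ioc p 1, 0 ≤ F k w := by
    intro k w hw
    have hw0 : (0:ℝ) < w := lt_trans hp hw.1
    have hL : 0 ≤ Real.log (1 / w) := Real.log_nonneg (one_le_one_div hw0 hw.2)
    have hpw : p / w ≤ 1 := (div_le_one hw0).mpr (le_of_lt hw.1)
    have : (0:ℝ) ≤ 1 - p / w := by linarith
    have h1 : 0 ≤ a ^ (k + 2) / (Nat.factorial k : ℝ) := by positivity
    exact mul_nonneg (mul_nonneg (mul_nonneg h1 (Real.rpow_nonneg hw0.le _))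
      (pow_nonneg hL k)) (Real.rpow_nonneg this _)
  -- bound the norm integrals
  set CB : ℝ := ∫ w in Set.Ioc p 1, (1 - p / w) ^ (a - 1) with hCB
  have hbound : ∀ k : ℕ, (∫ w in Set.Ioc p 1, ‖F k w‖)
      ≤ (a ^ 2 * (p ^ (a - 2) + 1) * CB) * ((a * Real.log (1 / p)) ^ k / (Nat.factorial k : ℝ)) := by
    intro k
    have hmono : ∀ w ∈ Set.Ioc p 1, ‖F k w‖
        ≤ ((a ^ (k + 2) / (Nat.factorial k : ℝ)) * (p ^ (a - 2) + 1) * (Real.log (1 / p)) ^ k)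
          * (1 - p / w) ^ (a - 1) := by
      intro w hw
      have hw0 : (0:ℝ) < w := lt_trans hp hw.1
      rw [Real.norm_of_nonneg (hFnonneg k w hw)]
      have hB0 : (0:ℝ) ≤ (1 - p / w) ^ (a - 1) := by
        have hpw : p / w ≤ 1 := (div_le_one hw0).mpr (le_of_lt hw.1)
        exact Real.rpow_nonneg (by linarith) _
      apply mul_le_mul_of_nonneg_right _ hB0
      have hwr : w ^ (a - 2) ≤ p ^ (a - 2) + 1 := by
        rcases le_or_gt a 2 with hc | hc
        · have := Real.rpow_le_rpow_of_nonpos hp (le_of_lt hw.1) (by linarith : a - 2 ≤ 0)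
          linarith
        · have h1 : w ^ (a - 2) ≤ 1 := Real.rpow_le_one hw0.le hw.2 (by linarith)
          have h2 : (0:ℝ) ≤ p ^ (a - 2) := Real.rpow_nonneg hp.le _
          linarith
      have hLle : Real.log (1 / w) ^ k ≤ Real.log (1 / p) ^ k := by
        apply pow_le_pow_left₀ (Real.log_nonneg (one_le_one_div hw0 hw.2))
        apply Real.log_le_log (by positivity)
        apply one_div_le_one_div_of_le hp (le_of_lt hw.1)
      have h1 : 0 ≤ a ^ (k + 2) / (Nat.factorial k : ℝ) := by positivity
      calc (a ^ (k + 2) / (Nat.factorial k : ℝ)) * w ^ (a - 2) * (Real.log (1/w)) ^ k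
          ≤ (a ^ (k + 2) / (Nat.factorial k : ℝ)) * (p ^ (a - 2) + 1) * (Real.log (1/w)) ^ k := by
            apply mul_le_mul_of_nonneg_right (mul_le_mul_of_nonneg_left hwr h1)
            exact pow_nonneg (Real.log_nonneg (one_le_one_div hw0 hw.2)) k
        _ ≤ (a ^ (k + 2) / (Nat.factorial k : ℝ)) * (p ^ (a - 2) + 1) * (Real.log (1/p)) ^ k := by
            apply mul_le_mul_of_nonneg_left hLle
            have h2 : (0:ℝ) ≤ p ^ (a - 2) := Real.rpow_nonneg hp.le _
            positivity
    have hintR : IntegrableOn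
        (fun w : ℝ => ((a ^ (k + 2) / (Nat.factorial k : ℝ)) * (p ^ (a - 2) + 1)
          * (Real.log (1 / p)) ^ k) * (1 - p / w) ^ (a - 1)) (Set.Ioc p 1) :=
      key _ continuousOn_const
    have h2 : (∫ w in Set.Ioc p 1, ‖F k w‖) ≤ ∫ w in Set.Ioc p 1,
        ((a ^ (k + 2) / (Nat.factorial k : ℝ)) * (p ^ (a - 2) + 1) * (Real.log (1 / p)) ^ k)
          * (1 - p / w) ^ (a - 1) := by
      apply setIntegral_mono_on (hFint k).norm hintR measurableSet_Ioc hmono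
    rw [MeasureTheory.integral_const_mul] at h2
    calc (∫ w in Set.Ioc p 1, ‖F k w‖)
        ≤ ((a ^ (k + 2) / (Nat.factorial k : ℝ)) * (p ^ (a - 2) + 1) * (Real.log (1 / p)) ^ k) * CB :=
          h2
      _ = (a ^ 2 * (p ^ (a - 2) + 1) * CB) * ((a * Real.log (1 / p)) ^ k / (Nat.factorial k : ℝ)) := by
          ring
  have hsummable : Summable fun k : ℕ => ∫ w in Set.Ioc p 1, ‖F k w‖ := by
    apply Summable.of_nonneg_of_le
      (fun k => integral_nonneg (fun w => norm_nonneg _)) hbound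
    exact (Real.summable_pow_div_factorial (a * Real.log (1 / p))).mul_left _
  -- the swap
  have hswap := MeasureTheory.integral_tsum_of_summable_integral_norm hFint hsummable
  -- pointwise tsum identity
  have hpt : ∀ w ∈ Set.Ioc p 1, ∑' k : ℕ, F k w
      = a ^ 2 * ((w ^ 2)⁻¹ * (1 - p / w) ^ (a - 1)) := by
    intro w hw
    have hw0 : (0:ℝ) < w := lt_trans hp hw.1
    simp only [hF]
    set L := Real.log (1 / w) with hL
    set B := (1 - p / w) ^ (a - 1) with hB
    have h1 : ∀ k : ℕ, ((a ^ (k+2) / (Nat.factorial k : ℝ)) * w ^ (a - 2) * L ^ k) * B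
        = (a ^ 2 * w ^ (a - 2) * B) * ((a * L) ^ k / (Nat.factorial k : ℝ)) := by
      intro k; ring
    rw [tsum_congr h1, tsum_mul_left]
    have h2 : ∑' k : ℕ, (a * L) ^ k / (Nat.factorial k : ℝ) = Real.exp (a * L) := by
      rw [Real.exp_eq_exp_ℝ, NormedSpace.exp_eq_tsum_div]
    rw [h2]
    have h3 : Real.exp (a * L) = w ^ (-a) := by
      rw [hL, mul_comm, ← Real.rpow_def_of_pos (by positivity), one_div,
        Real.inv_rpow hw0.le, ← Real.rpow_neg hw0.le]
    rw [h3]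
    have h4 : w ^ (a - 2) * w ^ (-a) = (w ^ 2)⁻¹ := by
      rw [← Real.rpow_add hw0, show a - 2 + -a = -2 by ring, Real.rpow_neg hw0.le,
        show (2:ℝ) = ((2:ℕ):ℝ) by norm_num, Real.rpow_natCast]
    rw [show a ^ 2 * w ^ (a - 2) * B * w ^ (-a)
      = a ^ 2 * ((w ^ (a - 2) * w ^ (-a)) * B) by ring, h4]
  -- compute the integral of the tsum
  have hintc : IntervalIntegrable (fun w : ℝ => (w ^ 2)⁻¹ * (1 - p / w) ^ (a - 1)) volume p 1 := by
    rw [intervalIntegrable_iff_integrableOn_Ioc_of_le hp1.le]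
    exact key _ ((continuousOn_id.pow 2).inv₀
      (fun w hw => pow_ne_zero 2 (lt_of_lt_of_le hp hw.1).ne'))
  have hval : ∫ w in Set.Ioc p 1, (∑' k : ℕ, F k w) = a * p⁻¹ * (1 - p) ^ a := by
    rw [setIntegral_congr_fun measurableSet_Ioc hpt, MeasureTheory.integral_const_mul,
      ← intervalIntegral.integral_of_le hp1.le, aux_ftc a p ha hp hp1 hintc]
    field_simp
  -- identify f (k+2) with ∫ F k
  have hf2 : ∀ k : ℕ, f (k + 2) = ∫ w in Set.Ioc p 1, F k w := by
    intro k
    rw [hfi (k + 2) (by omega)]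
    simp only [Nat.add_sub_cancel]
    rw [intervalIntegral.integral_of_le hp1.le, ← MeasureTheory.integral_const_mul]
    apply MeasureTheory.integral_congr_ae
    filter_upwards with w
    simp only [hF]
    ring
  have hsum2 : Summable fun k : ℕ => f (k + 2) := by
    have : Summable fun k : ℕ => ∫ w in Set.Ioc p 1, F k w :=
      (MeasureTheory.hasSum_integral_of_summable_integral_norm hFint hsummable).summable
    exact this.congr (fun k => (hf2 k).symm)
  have hsum1 : Summable fun i : ℕ => f (i + 1) := by
    rw [← summable_nat_add_iff 1]
    exact hsum2
  have htsum2 : ∑' k : ℕ, f (k + 2) = a * p⁻¹ * (1 - p) ^ a := by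
    rw [tsum_congr hf2, hswap, hval]
  rw [hsum1.tsum_eq_zero_add]
  have : ∑' k : ℕ, f (k + 1 + 1) = a * p⁻¹ * (1 - p) ^ a := by
    exact htsum2
  rw [this, zero_add, hf1]
  have h1p : (0:ℝ) < 1 - p := by linarith
  rw [show a = (a - 1) + 1 by ring, Real.rpow_add h1p, Real.rpow_one,
    show a - 1 + 1 - 1 = a - 1 by ring]
  field_simp
  ring
end

section
/- For α > 0 and integer M ≥ 1, the expected number of observed atoms in round i of the stick-breaking beta process, ξ_i = γ ∫_0^1 (1-(1-π)^M) f_i(π|α) dπ, satisfies ∑_{i=1}^∞ ξ_i = γ ∑_{n=0}^{M-1} α/(α+n) < ∞. -/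
open Real MeasureTheory intervalIntegral

lemma aux_rpow_ii (r : ℝ) (hr : -1 < r) :
    IntervalIntegrable (fun p : ℝ => (1 - p) ^ r) volume 0 1 := by
  have h := (intervalIntegral.intervalIntegrable_rpow' (a := 0) (b := 1) hr)
  have := (h.comp_sub_left 1).symm
  simpa using this

lemma aux_rpow_int (r : ℝ) (hr : -1 < r) :
    ∫ p in (0:ℝ)..1, (1 - p) ^ r = 1 / (r + 1) := by
  have h := intervalIntegral.integral_comp_sub_left (a := 0) (b := 1) (fun x : ℝ => x ^ r) 1
  simp only [sub_zero, sub_self] at h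
  rw [h, integral_rpow (Or.inl hr)]
  rw [Real.one_rpow, Real.zero_rpow (by linarith)]
  ring

lemma aux_exp (a : ℝ) (ha : 0 < a) (n : ℕ) : (-1:ℝ) < a + n - 1 := by
  have := Nat.cast_nonneg (α := ℝ) n; linarith

lemma aux_H_ii (a : ℝ) (ha : 0 < a) (M : ℕ) :
    IntervalIntegrable (fun p : ℝ => ∑ n ∈ Finset.range M, a * (1 - p) ^ (a + n - 1)) volume 0 1 := by
  have h : IntervalIntegrable (∑ n ∈ Finset.range M, fun p : ℝ => a * (1 - p) ^ (a + n - 1)) volume 0 1 :=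
    IntervalIntegrable.sum (f := fun (n : ℕ) (p : ℝ) => a * (1 - p) ^ (a + n - 1)) (Finset.range M)
      (fun n _ => (aux_rpow_ii (a + n - 1) (aux_exp a ha n)).const_mul a)
  have he : (∑ n ∈ Finset.range M, fun p : ℝ => a * (1 - p) ^ (a + n - 1))
      = fun p : ℝ => ∑ n ∈ Finset.range M, a * (1 - p) ^ (a + n - 1) := by
    funext p; simp [Finset.sum_apply]
  rwa [he] at h

lemma aux_H_int (a : ℝ) (ha : 0 < a) (M : ℕ) :
    ∫ p in (0:ℝ)..1, ∑ n ∈ Finset.range M, a * (1 - p) ^ (a + n - 1)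
      = ∑ n ∈ Finset.range M, a / (a + n) := by
  rw [intervalIntegral.integral_finset_sum (μ := volume) (a := 0) (b := 1)
    (s := Finset.range M) (f := fun (n : ℕ) (p : ℝ) => a * (1 - p) ^ (a + n - 1))
    (fun n _ => (aux_rpow_ii (a + n - 1) (aux_exp a ha n)).const_mul a)]
  refine Finset.sum_congr rfl fun n _ => ?_
  rw [intervalIntegral.integral_const_mul, aux_rpow_int _ (aux_exp a ha n)]
  rw [show a + (n:ℝ) - 1 + 1 = a + n by ring]
  ring

lemma aux_GH (a : ℝ) (M : ℕ) (p : ℝ) (hp : p ∈ Set.Ioo (0:ℝ) 1) :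
    (1 - (1 - p) ^ M) * (a * p⁻¹ * (1 - p) ^ (a - 1))
      = ∑ n ∈ Finset.range M, a * (1 - p) ^ (a + n - 1) := by
  obtain ⟨hp0, hp1⟩ := hp
  have h1p : (0:ℝ) < 1 - p := by linarith
  have hgeom : (1 : ℝ) - (1 - p) ^ M = p * ∑ n ∈ Finset.range M, (1 - p) ^ n := by
    have := geom_sum_mul (1 - p) M
    nlinarith [this]
  rw [hgeom, Finset.mul_sum, Finset.sum_mul]
  refine Finset.sum_congr rfl fun n _ => ?_
  have hn : ((1:ℝ) - p) ^ n = (1 - p) ^ (n : ℝ) := (rpow_natCast _ n).symm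
  rw [hn, ← mul_assoc]
  have : a + (n:ℝ) - 1 = (n:ℝ) + (a - 1) := by ring
  rw [this, rpow_add h1p]
  field_simp

/-- Let `f i` be the density of the `i`-th break of a `Beta(1,α)` stick-breaking
process, so that `∑_{i=1}^∞ f_i(π) = α π⁻¹ (1-π)^{α-1}` on `(0,1)`.  Then with
`ξ_i = γ ∫_0^1 (1-(1-π)^M) f_i(π) dπ`, one has
`∑_{i=1}^∞ ξ_i = γ ∑_{n=0}^{M-1} α/(α+n)` (in particular it is finite). -/
theorem stmt_18 (a g : ℝ) (ha : 0 < a) (hg : 0 < g) (M : ℕ) (hM : 1 ≤ M)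
    (f : ℕ → ℝ → ℝ)
    (hmeas : ∀ i, Measurable (f i))
    (hnonneg : ∀ i, ∀ p ∈ Set.Ioo (0:ℝ) 1, 0 ≤ f i p)
    (hsum : ∀ p ∈ Set.Ioo (0:ℝ) 1,
      ∑' i : ℕ, f (i + 1) p = a * p⁻¹ * (1 - p) ^ (a - 1))
    (ξ : ℕ → ℝ)
    (hξ : ∀ i, ξ i = g * ∫ p in (0:ℝ)..1, (1 - (1 - p) ^ M) * f i p) :
    ∑' i : ℕ, ξ (i + 1) = g * ∑ n ∈ Finset.range M, a / (a + n) := by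
  set μ := volume.restrict (Set.Ioo (0:ℝ) 1) with hμ
  set F : ℕ → ℝ → ℝ := fun i p => (1 - (1 - p) ^ M) * f (i + 1) p with hF
  set G : ℝ → ℝ := fun p => (1 - (1 - p) ^ M) * (a * p⁻¹ * (1 - p) ^ (a - 1)) with hG
  set H : ℝ → ℝ := fun p => ∑ n ∈ Finset.range M, a * (1 - p) ^ (a + n - 1) with hH
  set I : ℝ := ∑ n ∈ Finset.range M, a / (a + n) with hI
  have hInn : 0 ≤ I := by
    apply Finset.sum_nonneg
    intro n _
    have := Nat.cast_nonneg (α := ℝ) n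
    positivity
  -- coefficient nonneg on Ioo
  have hcoef : ∀ p ∈ Set.Ioo (0:ℝ) 1, 0 ≤ 1 - (1 - p) ^ M := by
    intro p hp
    have : (1 - p) ^ M ≤ 1 := pow_le_one₀ (by linarith [hp.2]) (by linarith [hp.1])
    linarith
  have hFnn : ∀ i, ∀ p ∈ Set.Ioo (0:ℝ) 1, 0 ≤ F i p := fun i p hp =>
    mul_nonneg (hcoef p hp) (hnonneg (i + 1) p hp)
  have hFnn_ae : ∀ i, 0 ≤ᵐ[μ] F i := fun i =>
    (ae_restrict_iff' measurableSet_Ioo).2 (ae_of_all _ (hFnn i))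
  have hFmeas : ∀ i, Measurable (F i) := fun i =>
    (measurable_const.sub ((measurable_const.sub measurable_id).pow_const M)).mul (hmeas (i + 1))
  -- integrability and value of H-integral on Ioo
  have hHii : IntegrableOn H (Set.Ioo (0:ℝ) 1) volume := by
    have := (intervalIntegrable_iff_integrableOn_Ioc_of_le (by norm_num : (0:ℝ) ≤ 1)).1
      (aux_H_ii a ha M)
    exact this.mono_set Set.Ioo_subset_Ioc_self
  have hHint : ∫ p in Set.Ioo (0:ℝ) 1, H p = I := by
    rw [← MeasureTheory.integral_Ioc_eq_integral_Ioo,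
      ← intervalIntegral.integral_of_le (by norm_num : (0:ℝ) ≤ 1)]
    exact aux_H_int a ha M
  have hGHeq : Set.EqOn G H (Set.Ioo (0:ℝ) 1) := fun p hp => aux_GH a M p hp
  have hGii : IntegrableOn G (Set.Ioo (0:ℝ) 1) volume :=
    hHii.congr_fun hGHeq.symm measurableSet_Ioo
  have hGint : ∫ p in Set.Ioo (0:ℝ) 1, G p = I := by
    rw [MeasureTheory.setIntegral_congr_fun measurableSet_Ioo hGHeq]
    exact hHint
  have hGnn_ae : 0 ≤ᵐ[μ] G :=
    (ae_restrict_iff' measurableSet_Ioo).2 (ae_of_all _ fun p hp => by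
      rw [hGHeq hp]
      exact Finset.sum_nonneg fun n _ => mul_nonneg ha.le (rpow_nonneg (by linarith [hp.2]) _))
  -- lintegral of G
  have hLG : ∫⁻ p, ENNReal.ofReal (G p) ∂μ = ENNReal.ofReal I := by
    rw [← MeasureTheory.ofReal_integral_eq_lintegral_ofReal hGii hGnn_ae, hGint]
  -- summability of the family f (i+1) p
  have hsummable : ∀ p ∈ Set.Ioo (0:ℝ) 1, Summable fun i : ℕ => f (i + 1) p := by
    intro p hp
    by_contra hns
    have h0 : ∑' i : ℕ, f (i + 1) p = 0 := tsum_eq_zero_of_not_summable hns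
    have hpos : 0 < a * p⁻¹ * (1 - p) ^ (a - 1) := by
      have h1 : 0 < p⁻¹ := inv_pos.2 hp.1
      have h2 : (0:ℝ) < 1 - p := by linarith [hp.2]
      positivity
    rw [hsum p hp] at h0
    linarith
  -- pointwise tsum identity on Ioo
  have hptwise : ∀ p ∈ Set.Ioo (0:ℝ) 1,
      (∑' i : ℕ, ENNReal.ofReal (F i p)) = ENNReal.ofReal (G p) := by
    intro p hp
    rw [← ENNReal.ofReal_tsum_of_nonneg (fun i => hFnn i p hp)
      (((hsummable p hp).mul_left _))]
    congr 1
    simp only [hF, hG]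
    rw [tsum_mul_left, hsum p hp]
  -- the sum of lintegrals
  set L : ℕ → ENNReal := fun i => ∫⁻ p, ENNReal.ofReal (F i p) ∂μ with hL
  have hLsum : ∑' i, L i = ENNReal.ofReal I := by
    rw [← MeasureTheory.lintegral_tsum (fun i => ((hFmeas i).ennreal_ofReal).aemeasurable)]
    rw [← hLG]
    apply lintegral_congr_ae
    exact (ae_restrict_iff' measurableSet_Ioo).2 (ae_of_all _ hptwise)
  have hLfin : ∀ i, L i ≠ ⊤ := by
    intro i
    have : L i ≤ ∑' j, L j := ENNReal.le_tsum i
    rw [hLsum] at this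
    exact ne_top_of_le_ne_top ENNReal.ofReal_ne_top this
  -- each F i integrable wrt μ, and its integral
  have hFint : ∀ i, ∫ p, F i p ∂μ = (L i).toReal := fun i =>
    MeasureTheory.integral_eq_lintegral_of_nonneg_ae (hFnn_ae i)
      (hFmeas i).aestronglyMeasurable
  -- ξ in terms of μ-integrals
  have hξ' : ∀ i : ℕ, ξ (i + 1) = g * (L i).toReal := by
    intro i
    rw [hξ (i + 1), intervalIntegral.integral_of_le (by norm_num : (0:ℝ) ≤ 1),
      MeasureTheory.integral_Ioc_eq_integral_Ioo]
    rw [← hFint i]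
  calc ∑' i : ℕ, ξ (i + 1) = ∑' i : ℕ, g * (L i).toReal := by
        simp only [hξ']
    _ = g * ∑' i : ℕ, (L i).toReal := tsum_mul_left
    _ = g * (∑' i, L i).toReal := by rw [ENNReal.tsum_toReal_eq hLfin]
    _ = g * I := by rw [hLsum, ENNReal.toReal_ofReal hInn]
end
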